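/- There exists K₁ > 0 such that: for all ξ ≥ 0, |φ(ξ) − ξ/m*| ≤ K₁ sech(γ₁ξ) and |φ′(ξ) − 1/m*| ≤ K₁ sech(γ₁ξ); for all ξ ≤ 0, |φ(ξ)| ≤ K₁ sech(γ₁ξ) and |φ′(ξ)| ≤ K₁ sech(γ₁ξ); and for all ξ ∈ ℝ, |φ″(ξ)| ≤ K₁ sech(γ₁ξ) and |φ‴(ξ)| ≤ K₁ sech(γ₁ξ). -/

import Mathlib

set_option linter.unusedVariables false

noncomputable section

open Real Filter Topology Set

/-- Partial derivative in the first spatial variable. -/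
def d1 (f : ℝ → ℝ → ℝ) (x y : ℝ) : ℝ := deriv (fun s => f s y) x

/-- Partial derivative in the second spatial variable. -/
def d2 (f : ℝ → ℝ → ℝ) (x y : ℝ) : ℝ := deriv (fun s => f x s) y

/-- Laplacian of a function of two real variables. -/
def lap (f : ℝ → ℝ → ℝ) (x y : ℝ) : ℝ := d1 (d1 f) x y + d2 (d2 f) x y

/-- The `i`-th component of `u` at time `t`, as a function of the two spatial variables. -/
def slc {m : ℕ} (u : ℝ → ℝ → ℝ → Fin m → ℝ) (i : Fin m) (t : ℝ) : ℝ → ℝ → ℝ :=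
  fun x y => u t x y i

/-- Time derivative of the `i`-th component of `u`. -/
def dt {m : ℕ} (u : ℝ → ℝ → ℝ → Fin m → ℝ) (i : Fin m) (t x y : ℝ) : ℝ :=
  deriv (fun τ => u τ x y i) t

/-- Hyperbolic secant. -/
def sech (r : ℝ) : ℝ := 2 / (Real.exp r + Real.exp (-r))

lemma sech_pos' (r : ℝ) : 0 < sech r := by
  unfold sech
  positivity

lemma exp_neg_abs_le_sech (r : ℝ) : Real.exp (-|r|) ≤ sech r := by
  unfold sech
  have h1 : Real.exp r + Real.exp (-r) ≤ 2 * Real.exp |r| := by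
    rcases abs_cases r with ⟨h, h'⟩ | ⟨h, h'⟩ <;> rw [h]
    · nlinarith [Real.exp_le_exp.mpr (show -r ≤ r by linarith), Real.exp_pos r]
    · nlinarith [Real.exp_le_exp.mpr (show r ≤ -r by linarith), Real.exp_pos (-r)]
  have h2 : 0 < Real.exp r + Real.exp (-r) := by positivity
  rw [le_div_iff₀ h2]
  have h3 : Real.exp (-|r|) * Real.exp |r| = 1 := by rw [← Real.exp_add]; simp
  nlinarith [Real.exp_pos (-|r|)]

lemma exp_div_sq_le (r : ℝ) : Real.exp r / (1 + Real.exp r) ^ 2 ≤ Real.exp (-|r|) := by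
  have hE : 0 < Real.exp r := Real.exp_pos r
  have hE1 : (0:ℝ) < (1 + Real.exp r) ^ 2 := by positivity
  rw [div_le_iff₀ hE1]
  rcases abs_cases r with ⟨h, h'⟩ | ⟨h, h'⟩ <;> rw [h]
  · have h3 : Real.exp (-r) * Real.exp r = 1 := by rw [← Real.exp_add]; simp
    nlinarith [Real.exp_pos (-r)]
  · simp only [neg_neg]
    nlinarith [sq_nonneg (Real.exp r)]

lemma hdA (m γ ξ : ℝ) (hm : m ≠ 0) (hγ : γ ≠ 0) :
    HasDerivAt (fun x => 1/(m*γ) * Real.log (1 + Real.exp (γ*x)))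
      (1/m * (Real.exp (γ*ξ) / (1 + Real.exp (γ*ξ)))) ξ := by
  have h0 : HasDerivAt (fun x : ℝ => γ*x) γ ξ := by
    simpa using (hasDerivAt_id ξ).const_mul γ
  have hexp := h0.exp
  have hE1 : (1:ℝ) + Real.exp (γ*ξ) ≠ 0 := by positivity
  have hlog := (hexp.const_add 1).log hE1
  have hfin := hlog.const_mul (1/(m*γ))
  refine hfin.congr_deriv ?_
  field_simp

lemma hdB (m γ ξ : ℝ) (hm : m ≠ 0) :
    HasDerivAt (fun x => 1/m * (Real.exp (γ*x) / (1 + Real.exp (γ*x))))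
      (γ/m * (Real.exp (γ*ξ) / (1 + Real.exp (γ*ξ))^2)) ξ := by
  have h0 : HasDerivAt (fun x : ℝ => γ*x) γ ξ := by
    simpa using (hasDerivAt_id ξ).const_mul γ
  have hexp := h0.exp
  have hE1 : (1:ℝ) + Real.exp (γ*ξ) ≠ 0 := by positivity
  have hq := hexp.div (hexp.const_add 1) hE1
  have hfin := hq.const_mul (1/m)
  refine hfin.congr_deriv ?_
  field_simp
  ring

lemma hdC (m γ ξ : ℝ) (hm : m ≠ 0) :
    HasDerivAt (fun x => γ/m * (Real.exp (γ*x) / (1 + Real.exp (γ*x))^2))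
      (γ^2/m * (Real.exp (γ*ξ) * (1 - Real.exp (γ*ξ)) / (1 + Real.exp (γ*ξ))^3)) ξ := by
  have h0 : HasDerivAt (fun x : ℝ => γ*x) γ ξ := by
    simpa using (hasDerivAt_id ξ).const_mul γ
  have hexp := h0.exp
  have hE1 : (1:ℝ) + Real.exp (γ*ξ) ≠ 0 := by positivity
  have hpow := (hexp.const_add 1).pow 2
  have hq := hexp.div hpow (pow_ne_zero 2 hE1)
  have hfin := hq.const_mul (γ/m)
  refine hfin.congr_deriv ?_
  simp only [Pi.pow_apply]
  field_simp
  ring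

theorem stmt10
    (c s : ℝ) (hc : 0 < c) (hsc : c < s)
    (mstar : ℝ) (hmstar : mstar = Real.sqrt (s ^ 2 - c ^ 2) / c)
    (γ₁ : ℝ) (hγ₁ : γ₁ = s * mstar)
    (φc : ℝ → ℝ) (hφc : ∀ ξ : ℝ, φc ξ = 1 / (mstar * γ₁) * Real.log (1 + Real.exp (γ₁ * ξ)))
    :
    ∃ K₁ > (0:ℝ),
      (∀ ξ : ℝ, 0 ≤ ξ → |φc ξ - ξ / mstar| ≤ K₁ * sech (γ₁ * ξ) ∧
        |deriv φc ξ - 1 / mstar| ≤ K₁ * sech (γ₁ * ξ)) ∧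
      (∀ ξ : ℝ, ξ ≤ 0 → |φc ξ| ≤ K₁ * sech (γ₁ * ξ) ∧ |deriv φc ξ| ≤ K₁ * sech (γ₁ * ξ)) ∧
      (∀ ξ : ℝ, |deriv (deriv φc) ξ| ≤ K₁ * sech (γ₁ * ξ) ∧
        |deriv (deriv (deriv φc)) ξ| ≤ K₁ * sech (γ₁ * ξ)) := by
  have hm : 0 < mstar := by
    rw [hmstar]
    apply div_pos _ hc
    apply Real.sqrt_pos.mpr
    nlinarith
  have hγ : 0 < γ₁ := by
    rw [hγ₁]
    exact mul_pos (lt_trans hc hsc) hm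
  have hm' : mstar ≠ 0 := ne_of_gt hm
  have hγ' : γ₁ ≠ 0 := ne_of_gt hγ
  -- derivative formulas
  have hφceq : φc = fun ξ => 1/(mstar*γ₁) * Real.log (1 + Real.exp (γ₁*ξ)) := by
    funext ξ
    simpa using hφc ξ
  have hD1 : deriv φc = fun ξ => 1/mstar * (Real.exp (γ₁*ξ) / (1 + Real.exp (γ₁*ξ))) := by
    funext ξ; rw [hφceq]; exact (hdA mstar γ₁ ξ hm' hγ').deriv
  have hD2 : deriv (deriv φc) =
      fun ξ => γ₁/mstar * (Real.exp (γ₁*ξ) / (1 + Real.exp (γ₁*ξ))^2) := by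
    funext ξ; rw [hD1]; exact (hdB mstar γ₁ ξ hm').deriv
  have hD3 : deriv (deriv (deriv φc)) =
      fun ξ => γ₁^2/mstar *
        (Real.exp (γ₁*ξ) * (1 - Real.exp (γ₁*ξ)) / (1 + Real.exp (γ₁*ξ))^3) := by
    funext ξ; rw [hD2]; exact (hdC mstar γ₁ ξ hm').deriv
  set K₁ : ℝ := 1/(mstar*γ₁) + 1/mstar + γ₁/mstar + γ₁^2/mstar + 1 with hK₁def
  have hK : 0 < K₁ := by positivity
  have hc1 : (0:ℝ) < 1/(mstar*γ₁) := by positivity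
  have hc2 : (0:ℝ) < 1/mstar := by positivity
  have hc3 : (0:ℝ) < γ₁/mstar := by positivity
  have hc4 : (0:ℝ) < γ₁^2/mstar := by positivity
  have key : ∀ (r C y : ℝ), C ≤ K₁ → |y| ≤ C * Real.exp (-|r|) → |y| ≤ K₁ * sech r := by
    intro r C y hCK hy
    calc |y| ≤ C * Real.exp (-|r|) := hy
      _ ≤ K₁ * sech r :=
        mul_le_mul hCK (exp_neg_abs_le_sech r) (Real.exp_pos _).le hK.le
  refine ⟨K₁, hK, ?_, ?_, ?_⟩
  · -- ξ ≥ 0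
    intro ξ hξ
    have hr : 0 ≤ γ₁ * ξ := mul_nonneg hγ.le hξ
    have habs : |γ₁ * ξ| = γ₁ * ξ := abs_of_nonneg hr
    have hE : 0 < Real.exp (γ₁*ξ) := Real.exp_pos _
    have hEn : 0 < Real.exp (-(γ₁*ξ)) := Real.exp_pos _
    have hmulE : Real.exp (γ₁*ξ) * Real.exp (-(γ₁*ξ)) = 1 := by
      rw [← Real.exp_add]; simp
    constructor
    · apply key (γ₁*ξ) (1/(mstar*γ₁))
      · linarith
      · have hsplit : Real.log (1 + Real.exp (γ₁*ξ)) =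
            γ₁*ξ + Real.log (1 + Real.exp (-(γ₁*ξ))) := by
          have heq : (1:ℝ) + Real.exp (γ₁*ξ) =
              Real.exp (γ₁*ξ) * (1 + Real.exp (-(γ₁*ξ))) := by
            rw [mul_add, mul_one, hmulE]; ring
          rw [heq, Real.log_mul (Real.exp_ne_zero _) (by positivity), Real.log_exp]
        have hdiff : φc ξ - ξ/mstar = 1/(mstar*γ₁) * Real.log (1 + Real.exp (-(γ₁*ξ))) := by
          rw [hφc ξ, hsplit]
          field_simp
          ring
        have hlogpos : 0 ≤ Real.log (1 + Real.exp (-(γ₁*ξ))) :=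
          Real.log_nonneg (by linarith)
        have hlogle : Real.log (1 + Real.exp (-(γ₁*ξ))) ≤ Real.exp (-(γ₁*ξ)) := by
          have := Real.log_le_sub_one_of_pos (show (0:ℝ) < 1 + Real.exp (-(γ₁*ξ)) by positivity)
          linarith
        rw [hdiff, abs_of_nonneg (mul_nonneg hc1.le hlogpos), habs]
        exact mul_le_mul_of_nonneg_left hlogle hc1.le
    · apply key (γ₁*ξ) (1/mstar)
      · linarith
      · have hdiff : deriv φc ξ - 1/mstar = -(1/mstar * (1/(1 + Real.exp (γ₁*ξ)))) := by
          rw [hD1]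
          have h1 : (1:ℝ) + Real.exp (γ₁*ξ) ≠ 0 := by positivity
          field_simp
          ring
        have hfrac : 1/(1 + Real.exp (γ₁*ξ)) ≤ Real.exp (-(γ₁*ξ)) := by
          rw [div_le_iff₀ (by positivity)]
          nlinarith
        rw [hdiff, abs_neg, abs_of_nonneg (by positivity), habs]
        exact mul_le_mul_of_nonneg_left hfrac hc2.le
  · -- ξ ≤ 0
    intro ξ hξ
    have hr : γ₁ * ξ ≤ 0 := mul_nonpos_of_nonneg_of_nonpos hγ.le hξ
    have habs : |γ₁ * ξ| = -(γ₁ * ξ) := abs_of_nonpos hr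
    have hE : 0 < Real.exp (γ₁*ξ) := Real.exp_pos _
    constructor
    · apply key (γ₁*ξ) (1/(mstar*γ₁))
      · linarith
      · have hlogpos : 0 ≤ Real.log (1 + Real.exp (γ₁*ξ)) :=
          Real.log_nonneg (by linarith)
        have hlogle : Real.log (1 + Real.exp (γ₁*ξ)) ≤ Real.exp (γ₁*ξ) := by
          have := Real.log_le_sub_one_of_pos (show (0:ℝ) < 1 + Real.exp (γ₁*ξ) by positivity)
          linarith
        rw [hφc ξ, abs_of_nonneg (mul_nonneg hc1.le hlogpos), habs, neg_neg]
        exact mul_le_mul_of_nonneg_left hlogle hc1.le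
    · apply key (γ₁*ξ) (1/mstar)
      · linarith
      · have hfrac : Real.exp (γ₁*ξ) / (1 + Real.exp (γ₁*ξ)) ≤ Real.exp (γ₁*ξ) := by
          rw [div_le_iff₀ (by positivity)]
          nlinarith
        rw [hD1]
        simp only
        rw [abs_of_nonneg (by positivity), habs, neg_neg]
        exact mul_le_mul_of_nonneg_left hfrac hc2.le
  · -- all ξ
    intro ξ
    have hE : 0 < Real.exp (γ₁*ξ) := Real.exp_pos _
    have hE1 : (0:ℝ) < 1 + Real.exp (γ₁*ξ) := by positivity
    have hsq := exp_div_sq_le (γ₁*ξ)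
    constructor
    · apply key (γ₁*ξ) (γ₁/mstar)
      · linarith
      · rw [hD2]
        simp only
        rw [abs_of_nonneg (by positivity)]
        exact mul_le_mul_of_nonneg_left hsq hc3.le
    · apply key (γ₁*ξ) (γ₁^2/mstar)
      · linarith
      · rw [hD3]
        simp only
        have h6 : |Real.exp (γ₁*ξ) * (1 - Real.exp (γ₁*ξ)) / (1 + Real.exp (γ₁*ξ))^3| ≤
            Real.exp (γ₁*ξ) / (1 + Real.exp (γ₁*ξ))^2 := by
          rw [abs_div, abs_mul, abs_of_pos hE, abs_of_pos (show (0:ℝ) < (1 + Real.exp (γ₁*ξ))^3 by positivity)]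
          have habs1 : |1 - Real.exp (γ₁*ξ)| ≤ 1 + Real.exp (γ₁*ξ) :=
            abs_le.mpr ⟨by nlinarith, by nlinarith⟩
          calc Real.exp (γ₁*ξ) * |1 - Real.exp (γ₁*ξ)| / (1 + Real.exp (γ₁*ξ))^3
              ≤ Real.exp (γ₁*ξ) * (1 + Real.exp (γ₁*ξ)) / (1 + Real.exp (γ₁*ξ))^3 := by
                gcongr
            _ = Real.exp (γ₁*ξ) / (1 + Real.exp (γ₁*ξ))^2 := by
                field_simp
        rw [abs_mul, abs_of_nonneg hc4.le]
        calc γ₁^2/mstar * |Real.exp (γ₁*ξ) * (1 - Real.exp (γ₁*ξ)) / (1 + Real.exp (γ₁*ξ))^3|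
            ≤ γ₁^2/mstar * (Real.exp (γ₁*ξ) / (1 + Real.exp (γ₁*ξ))^2) :=
              mul_le_mul_of_nonneg_left h6 hc4.le
          _ ≤ γ₁^2/mstar * Real.exp (-|γ₁*ξ|) :=
              mul_le_mul_of_nonneg_left hsq hc4.le
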